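/- Let p > 1, and let G ∈ C²([0,∞)) satisfy G''(t) ≥ A e^{-b₁(t+R)} G(t)^p for t > 0, G(0) > 0, G'(0) > 0, with A, b₁, R > 0. Then for all t ≥ G(0)/G'(0), G'(t) > (A/(p+1))^{1/2} e^{-(b₁/2)(t+R)} G(t)^{(p+1)/2}. -/

import Mathlib

open Real

theorem stmt_2 (p A b₁ R : ℝ) (hp : 1 < p) (hA : 0 < A) (hb : 0 < b₁) (hR : 0 < R)
    (G : ℝ → ℝ) (hG : ContDiff ℝ 2 G)
    (hG'' : ∀ t > (0:ℝ), deriv (deriv G) t ≥ A * Real.exp (-b₁ * (t + R)) * G t ^ p)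
    (hG0 : 0 < G 0) (hG'0 : 0 < deriv G 0) :
    ∀ t ≥ G 0 / deriv G 0,
      deriv G t > (A / (p + 1)) ^ ((1:ℝ)/2) * Real.exp (-(b₁ / 2) * (t + R))
        * G t ^ ((p + 1) / 2) := by
  have hGcont : Continuous G := hG.continuous
  have hGdiff : Differentiable ℝ G := hG.differentiable (by norm_num)
  have hG1 : ContDiff ℝ ((1:ℕ)+1) G := by exact_mod_cast hG
  have hG'c1 : ContDiff ℝ 1 (deriv G) := (contDiff_succ_iff_deriv.mp hG1).2.2
  have hG'diff : Differentiable ℝ (deriv G) := hG'c1.differentiable (by norm_num)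
  have hG'cont : Continuous (deriv G) := hG'diff.continuous
  -- Step 1: G is positive on [0, ∞)
  have hGpos : ∀ t : ℝ, 0 ≤ t → 0 < G t := by
    by_contra hcon
    push_neg at hcon
    obtain ⟨t₁, ht₁0, ht₁⟩ := hcon
    set S : Set ℝ := {t | 0 ≤ t} ∩ {t | G t ≤ 0} with hS
    have hSne : S.Nonempty := ⟨t₁, ht₁0, ht₁⟩
    have hSclosed : IsClosed S :=
      (isClosed_le continuous_const continuous_id).inter (isClosed_le hGcont continuous_const)
    have hSbdd : BddBelow S := ⟨0, fun x hx => hx.1⟩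
    set s := sInf S with hsdef
    have hsmem : s ∈ S := hSclosed.csInf_mem hSne hSbdd
    have hsneg : G s ≤ 0 := hsmem.2
    have hs0 : 0 < s := by
      rcases (show (0:ℝ) ≤ s from hsmem.1).lt_or_eq with h | h
      · exact h
      · exact absurd (h ▸ hsneg) (not_le.mpr hG0)
    have hpre : ∀ u, 0 ≤ u → u < s → 0 < G u := by
      intro u hu0 hus
      by_contra hGu
      exact absurd (csInf_le hSbdd ⟨hu0, le_of_not_gt hGu⟩) (not_le.mpr hus)
    have hderiv2 : ∀ x ∈ Set.Ioo (0:ℝ) s, 0 ≤ deriv (deriv G) x := by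
      intro x hx
      refine le_trans ?_ (hG'' x hx.1)
      have := (hpre x hx.1.le hx.2).le
      positivity
    have hmono : MonotoneOn (deriv G) (Set.Icc 0 s) := by
      apply monotoneOn_of_deriv_nonneg (convex_Icc 0 s) hG'cont.continuousOn
        (hG'diff.differentiableOn)
      intro x hx
      rw [interior_Icc] at hx
      exact hderiv2 x hx
    have hG'pos : ∀ x ∈ Set.Ioo (0:ℝ) s, 0 < deriv G x := by
      intro x hx
      exact lt_of_lt_of_le hG'0 (hmono (Set.left_mem_Icc.mpr hs0.le)
        ⟨hx.1.le, hx.2.le⟩ hx.1.le)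
    have hGstrict : StrictMonoOn G (Set.Icc 0 s) := by
      apply strictMonoOn_of_deriv_pos (convex_Icc 0 s) hGcont.continuousOn
      intro x hx
      rw [interior_Icc] at hx
      exact hG'pos x hx
    have : G 0 < G s := hGstrict (Set.left_mem_Icc.mpr hs0.le)
      (Set.right_mem_Icc.mpr hs0.le) hs0
    linarith
  -- second derivative nonneg on (0, ∞)
  have hD2 : ∀ x : ℝ, 0 < x → 0 ≤ deriv (deriv G) x := by
    intro x hx
    refine le_trans ?_ (hG'' x hx)
    have := (hGpos x hx.le).le
    positivity
  -- deriv G monotone on [0,∞)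
  have hmono : MonotoneOn (deriv G) (Set.Ici 0) := by
    apply monotoneOn_of_deriv_nonneg (convex_Ici 0) hG'cont.continuousOn
      hG'diff.differentiableOn
    intro x hx
    rw [interior_Ici] at hx
    exact hD2 x hx
  have hG'pos : ∀ t : ℝ, 0 ≤ t → deriv G 0 ≤ deriv G t := fun t ht =>
    hmono Set.self_mem_Ici ht ht
  -- linear lower bound for G
  have hGlin : ∀ t : ℝ, 0 ≤ t → G 0 + deriv G 0 * t ≤ G t := by
    intro t ht
    have hder : ∀ x : ℝ, HasDerivAt (fun u => G u - deriv G 0 * u)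
        (deriv G x - deriv G 0) x := by
      intro x
      have h1 : HasDerivAt (fun u : ℝ => deriv G 0 * u) (deriv G 0) x := by
        simpa using (hasDerivAt_id x).const_mul (deriv G 0)
      exact (hGdiff x).hasDerivAt.sub h1
    have hcont2 : Continuous (fun u : ℝ => G u - deriv G 0 * u) := by fun_prop
    have hφ : MonotoneOn (fun u => G u - deriv G 0 * u) (Set.Ici 0) := by
      apply monotoneOn_of_deriv_nonneg (convex_Ici 0) hcont2.continuousOn
        (fun x _ => (hder x).differentiableAt.differentiableWithinAt)
      intro x hx
      rw [interior_Ici] at hx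
      rw [(hder x).deriv]
      linarith [hG'pos x hx.le]
    have := hφ Set.self_mem_Ici (Set.mem_Ici.mpr ht) ht
    simp only at this
    linarith
  have hGmono : ∀ t : ℝ, 0 ≤ t → G 0 ≤ G t := by
    intro t ht
    nlinarith [hGlin t ht, hG'0.le]
  have hp1 : (0:ℝ) < p + 1 := by linarith
  -- the auxiliary function W
  set W : ℝ → ℝ := fun t => (deriv G t)^2
      - (2*A/(p+1)) * (Real.exp (-b₁*(t+R)) * (G t ^ (p+1) - G 0 ^ (p+1))) with hW
  -- derivative of W
  have hWderiv : ∀ x : ℝ, 0 < x → HasDerivAt W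
      (2 * deriv G x * deriv (deriv G) x
        - (2*A/(p+1)) * ((-b₁ * Real.exp (-b₁*(x+R))) * (G x ^ (p+1) - G 0 ^ (p+1))
          + Real.exp (-b₁*(x+R)) * ((p+1) * G x ^ p * deriv G x))) x := by
    intro x hx
    have h1 : HasDerivAt (fun t => (deriv G t)^2) (2 * deriv G x * deriv (deriv G) x) x := by
      have : HasDerivAt (fun t => deriv G t ^ 2) _ x := ((hG'diff x).hasDerivAt).pow 2
      simpa [mul_comm, mul_assoc, mul_left_comm] using this
    have h2 : HasDerivAt (fun t : ℝ => Real.exp (-b₁*(t+R))) (-b₁ * Real.exp (-b₁*(x+R))) x := by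
      have h : HasDerivAt (fun t : ℝ => -b₁ * (t + R)) (-b₁) x := by
        simpa using ((hasDerivAt_id x).add_const R).const_mul (-b₁)
      simpa [mul_comm] using h.exp
    have h3 : HasDerivAt (fun t => G t ^ (p+1) - G 0 ^ (p+1))
        ((p+1) * G x ^ p * deriv G x) x := by
      have := ((hGdiff x).hasDerivAt).rpow_const (p := p+1)
        (Or.inl (ne_of_gt (hGpos x hx.le)))
      have h4 := this.sub_const (G 0 ^ (p+1))
      simp only [add_sub_cancel_right] at h4
      refine h4.congr_deriv ?_
      ring
    exact h1.sub (((h2.mul h3)).const_mul (2*A/(p+1)))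
  have hWd_nonneg : ∀ x : ℝ, 0 < x → 0 ≤ (2 * deriv G x * deriv (deriv G) x
        - (2*A/(p+1)) * ((-b₁ * Real.exp (-b₁*(x+R))) * (G x ^ (p+1) - G 0 ^ (p+1))
          + Real.exp (-b₁*(x+R)) * ((p+1) * G x ^ p * deriv G x))) := by
    intro x hx
    have he : 0 < Real.exp (-b₁*(x+R)) := Real.exp_pos _
    have hg : 0 < G x := hGpos x hx.le
    have hg' : 0 < deriv G x := lt_of_lt_of_le hG'0 (hG'pos x hx.le)
    have hgp : (0:ℝ) ≤ G x ^ p := (Real.rpow_pos_of_pos hg p).le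
    have h2nd := hG'' x hx
    have hge : G 0 ^ (p+1) ≤ G x ^ (p+1) :=
      Real.rpow_le_rpow hG0.le (hGmono x hx.le) hp1.le
    have key : (2*A/(p+1)) * (Real.exp (-b₁*(x+R)) * ((p+1) * G x ^ p * deriv G x))
        ≤ 2 * deriv G x * deriv (deriv G) x := by
      have heq : (2*A/(p+1)) * (Real.exp (-b₁*(x+R)) * ((p+1) * G x ^ p * deriv G x))
          = 2 * deriv G x * (A * Real.exp (-b₁*(x+R)) * G x ^ p) := by
        field_simp
      rw [heq]
      have := mul_le_mul_of_nonneg_left h2nd (by positivity : (0:ℝ) ≤ 2 * deriv G x)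
      linarith
    have hpos2 : 0 ≤ (2*A/(p+1)) * (b₁ * Real.exp (-b₁*(x+R)) * (G x ^ (p+1) - G 0 ^ (p+1))) := by
      have h1 : (0:ℝ) ≤ 2*A/(p+1) := by positivity
      have h2 : (0:ℝ) ≤ b₁ * Real.exp (-b₁*(x+R)) * (G x ^ (p+1) - G 0 ^ (p+1)) := by
        apply mul_nonneg (by positivity)
        linarith
      exact mul_nonneg h1 h2
    nlinarith [key, hpos2]
  -- W is monotone on [0, ∞)
  have hWcont : Continuous W := by
    apply Continuous.sub (hG'cont.pow 2)
    apply continuous_const.mul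
    apply Continuous.mul
    · exact ((continuous_const.mul (continuous_id.add continuous_const)).rexp)
    · apply Continuous.sub _ continuous_const
      apply Continuous.rpow_const hGcont
      intro x; right; linarith
  have hWmono : MonotoneOn W (Set.Ici 0) := by
    apply monotoneOn_of_deriv_nonneg (convex_Ici 0) hWcont.continuousOn
    · intro x hx
      rw [interior_Ici] at hx
      exact ((hWderiv x hx).differentiableAt).differentiableWithinAt
    · intro x hx
      rw [interior_Ici] at hx
      rw [(hWderiv x hx).deriv]
      exact hWd_nonneg x hx
  -- main conclusion
  intro t ht
  have ht0pos : 0 < G 0 / deriv G 0 := div_pos hG0 hG'0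
  have htpos : 0 < t := lt_of_lt_of_le ht0pos ht
  have hWt : W 0 ≤ W t := hWmono Set.self_mem_Ici htpos.le htpos.le
  have hW0 : W 0 = (deriv G 0)^2 := by simp [hW]
  have hWt' : (deriv G 0)^2 ≤ (deriv G t)^2
      - (2*A/(p+1)) * (Real.exp (-b₁*(t+R)) * (G t ^ (p+1) - G 0 ^ (p+1))) := by
    rw [hW0] at hWt; exact hWt
  have hepos : 0 < Real.exp (-b₁*(t+R)) := Real.exp_pos _
  have hgt : 0 < G t := hGpos t htpos.le
  have hg't : 0 < deriv G t := lt_of_lt_of_le hG'0 (hG'pos t htpos.le)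
  -- G t ≥ 2 * G 0
  have hG2 : 2 * G 0 ≤ G t := by
    have h1 := hGlin t htpos.le
    have h2 : G 0 ≤ deriv G 0 * t := by
      rw [ge_iff_le, div_le_iff₀ hG'0] at ht
      linarith
    linarith
  -- G t ^ (p+1) > 2 * G 0 ^ (p+1)
  have hpow2 : 2 * G 0 ^ (p+1) < G t ^ (p+1) := by
    have h1 : (2 * G 0) ^ (p+1) ≤ G t ^ (p+1) :=
      Real.rpow_le_rpow (by positivity) hG2 hp1.le
    have h2 : ((2:ℝ) * G 0) ^ (p+1) = 2 ^ (p+1) * G 0 ^ (p+1) :=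
      Real.mul_rpow (by norm_num) hG0.le
    have h3 : (2:ℝ) < 2 ^ (p+1) := by
      calc (2:ℝ) = 2 ^ (1:ℝ) := (Real.rpow_one 2).symm
      _ < 2 ^ (p+1) := by
          apply Real.rpow_lt_rpow_left_iff (by norm_num : (1:ℝ) < 2) |>.mpr
          linarith
    have h4 : (0:ℝ) < G 0 ^ (p+1) := Real.rpow_pos_of_pos hG0 _
    nlinarith
  -- key quadratic inequality
  have h5 : (0:ℝ) < A/(p+1) := by positivity
  have hkey : (A/(p+1)) * Real.exp (-b₁*(t+R)) * G t ^ (p+1) < (deriv G t)^2 := by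
    have hexp : (2*A/(p+1)) * (Real.exp (-b₁*(t+R)) * (G t ^ (p+1) - G 0 ^ (p+1)))
        = 2*((A/(p+1)) * Real.exp (-b₁*(t+R)) * G t ^ (p+1))
          - 2*((A/(p+1)) * Real.exp (-b₁*(t+R)) * G 0 ^ (p+1)) := by
      field_simp
    have hint : 0 < (A/(p+1)) * Real.exp (-b₁*(t+R)) * G t ^ (p+1)
        - 2*((A/(p+1)) * Real.exp (-b₁*(t+R)) * G 0 ^ (p+1)) := by
      have h6 : (0:ℝ) < (A/(p+1)) * Real.exp (-b₁*(t+R)) := mul_pos h5 hepos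
      nlinarith [mul_lt_mul_of_pos_left hpow2 h6]
    rw [hexp] at hWt'
    nlinarith [hWt', hint, sq_nonneg (deriv G 0)]
  -- identify the RHS squared
  set c := (A / (p + 1)) ^ ((1:ℝ)/2) * Real.exp (-(b₁ / 2) * (t + R)) * G t ^ ((p + 1) / 2)
    with hc
  have hcnn : 0 ≤ c := by positivity
  have hcsq : c^2 = (A/(p+1)) * Real.exp (-b₁*(t+R)) * G t ^ (p+1) := by
    have e1 : ((A / (p + 1)) ^ ((1:ℝ)/2))^2 = A/(p+1) := by
      rw [sq, ← Real.rpow_add h5]; norm_num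
    have e2 : (Real.exp (-(b₁ / 2) * (t + R)))^2 = Real.exp (-b₁*(t+R)) := by
      rw [sq, ← Real.exp_add]; ring_nf
    have e3 : (G t ^ ((p + 1) / 2))^2 = G t ^ (p+1) := by
      rw [sq, ← Real.rpow_add hgt]; ring_nf
    rw [hc, mul_pow, mul_pow, e1, e2, e3]
  have hlt : c^2 < (deriv G t)^2 := by rw [hcsq]; exact hkey
  exact lt_of_pow_lt_pow_left₀ 2 hg't.le hlt
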